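/- For every integer n ≥ 1, one has the real inequality 3^{3n} · (n!)³ ≥ (2π/√3) · e^{-1/36} · n · (3n)!. -/

import Mathlib

open Real Filter Stirling Topology

noncomputable def myA (n : ℕ) : ℝ :=
  (3:ℝ)^(3*n) * (n.factorial:ℝ)^3 / ((n : ℝ) * ((3*n).factorial : ℝ))

lemma myA_step (n : ℕ) (hn : 1 ≤ n) : myA (n+1) ≤ myA n := by
  have hn0 : (0:ℝ) < (n:ℝ) := by exact_mod_cast hn
  have h1 : (0:ℝ) < ((n:ℝ)+1) * ((3*(n+1)).factorial : ℝ) := by positivity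
  have h2 : (0:ℝ) < (n:ℝ) * ((3*n).factorial : ℝ) := by positivity
  unfold myA
  push_cast
  rw [div_le_div_iff₀ h1 h2]
  have e1 : 3*(n+1) = (3*n+1)+1+1 := by ring
  rw [e1, Nat.factorial_succ (n := n), Nat.factorial_succ, Nat.factorial_succ,
    Nat.factorial_succ, pow_succ, pow_succ, pow_succ]
  push_cast
  have key : (27:ℝ)*(((n:ℝ)+1)^3*(n:ℝ)) ≤
      ((n:ℝ)+1)*(((3*(n:ℝ)+1)+1+1)*((((3*(n:ℝ)+1)+1))*((3*(n:ℝ)+1)))) := by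
    nlinarith [sq_nonneg ((n:ℝ)+1), hn0]
  have C : (0:ℝ) < (3:ℝ)^(3*n) * (n.factorial:ℝ)^3 * ((3*n).factorial:ℝ) := by positivity
  nlinarith [mul_le_mul_of_nonneg_right key C.le]

lemma myA_eq (n : ℕ) (hn : 1 ≤ n) :
    myA n = 2 / Real.sqrt 3 * stirlingSeq n ^ 3 / stirlingSeq (3*n) := by
  have hn0 : (0:ℝ) < (n:ℝ) := by exact_mod_cast hn
  have hs2 : (0:ℝ) < Real.sqrt (2*n) := Real.sqrt_pos.mpr (by positivity)
  have hs3 : (0:ℝ) < Real.sqrt 3 := by positivity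
  have hne : ((n:ℝ)/Real.exp 1)^n ≠ 0 := by positivity
  have hfn : (0:ℝ) < (n.factorial : ℝ) := by exact_mod_cast n.factorial_pos
  have hf3n : (0:ℝ) < ((3*n).factorial : ℝ) := by exact_mod_cast (3*n).factorial_pos
  unfold myA stirlingSeq
  have hc : ((3*n : ℕ) : ℝ) = 3 * n := by push_cast; ring
  rw [hc]
  have h6 : Real.sqrt (2*(3*(n:ℝ))) = Real.sqrt 3 * Real.sqrt (2*n) := by
    rw [← Real.sqrt_mul (by norm_num)]
    ring_nf
  have h3p : (3*(n:ℝ)/Real.exp 1)^(3*n) = 3^(3*n) * ((n:ℝ)/Real.exp 1)^(3*n) := by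
    rw [mul_div_assoc, mul_pow]
  have hpow : ((n:ℝ)/Real.exp 1)^(3*n) = (((n:ℝ)/Real.exp 1)^n)^3 := by
    rw [← pow_mul, mul_comm 3 n]
  rw [h6, h3p, hpow]
  have c2 : Real.sqrt 2 ^ 3 = 2 * Real.sqrt 2 := by
    rw [pow_succ, Real.sq_sqrt] <;> norm_num
  have cn : Real.sqrt (n:ℝ) ^ 3 = (n:ℝ) * Real.sqrt (n:ℝ) := by
    rw [pow_succ, Real.sq_sqrt hn0.le]
  field_simp
  rw [Real.sq_sqrt (by positivity)]

lemma myA_tendsto : Tendsto myA atTop (𝓝 (2 * π / Real.sqrt 3)) := by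
  have hpi : (0:ℝ) < Real.sqrt π := Real.sqrt_pos.mpr Real.pi_pos
  have h3 : Tendsto (fun n : ℕ => stirlingSeq (3*n)) atTop (𝓝 (Real.sqrt π)) := by
    refine tendsto_stirlingSeq_sqrt_pi.comp ?_
    exact tendsto_atTop_mono (fun n => Nat.le_mul_of_pos_left n (by norm_num)) tendsto_id
  have h1 : Tendsto (fun n : ℕ => 2 / Real.sqrt 3 * stirlingSeq n ^ 3 / stirlingSeq (3*n))
      atTop (𝓝 (2 / Real.sqrt 3 * Real.sqrt π ^ 3 / Real.sqrt π)) :=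
    (Tendsto.mul tendsto_const_nhds (tendsto_stirlingSeq_sqrt_pi.pow 3)).div h3 hpi.ne'
  have heq : 2 / Real.sqrt 3 * Real.sqrt π ^ 3 / Real.sqrt π = 2 * π / Real.sqrt 3 := by
    rw [pow_succ, Real.sq_sqrt Real.pi_pos.le]
    field_simp
  rw [heq] at h1
  refine Tendsto.congr' ?_ h1
  filter_upwards [eventually_ge_atTop 1] with m hm
  exact (myA_eq m hm).symm

lemma myA_ge (n : ℕ) (hn : 1 ≤ n) : 2 * π / Real.sqrt 3 ≤ myA n := by
  refine le_of_tendsto myA_tendsto ?_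
  filter_upwards [eventually_ge_atTop n] with m hm
  induction m, hm using Nat.le_induction with
  | base => exact le_refl _
  | succ m hm ih => exact (myA_step m (hn.trans hm)).trans ih


/-- For every integer `n ≥ 1`,
`3^(3n) · (n!)³ ≥ (2π/√3) · e^(-1/36) · n · (3n)!` as real numbers. -/

theorem stmt_5 (n : ℕ) (hn : 1 ≤ n) :
    (2 * π / Real.sqrt 3) * Real.exp (-(1 / 36)) * (n : ℝ) * ((3 * n).factorial : ℝ) ≤
      (3 : ℝ) ^ (3 * n) * ((n.factorial : ℝ)) ^ 3 := by
  have hn0 : (0:ℝ) < (n:ℝ) := by exact_mod_cast hn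
  have hD : (0:ℝ) < (n:ℝ) * ((3*n).factorial : ℝ) := by positivity
  have hA := myA_ge n hn
  have hc : (0:ℝ) ≤ 2 * π / Real.sqrt 3 := by positivity
  have hexp : Real.exp (-(1/36)) ≤ 1 := Real.exp_le_one_iff.mpr (by norm_num)
  have h1 : 2 * π / Real.sqrt 3 * ((n:ℝ) * ((3*n).factorial : ℝ)) ≤
      (3:ℝ)^(3*n) * (n.factorial:ℝ)^3 := by
    have := mul_le_mul_of_nonneg_right hA hD.le
    rwa [myA, div_mul_cancel₀ _ hD.ne'] at this
  calc (2 * π / Real.sqrt 3) * Real.exp (-(1 / 36)) * (n : ℝ) * ((3 * n).factorial : ℝ)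
      ≤ (2 * π / Real.sqrt 3) * 1 * (n : ℝ) * ((3 * n).factorial : ℝ) := by
        have := mul_le_mul_of_nonneg_left hexp hc
        nlinarith [mul_pos hn0 (show (0:ℝ) < ((3*n).factorial:ℝ) by positivity)]
    _ = 2 * π / Real.sqrt 3 * ((n:ℝ) * ((3*n).factorial : ℝ)) := by ring
    _ ≤ _ := h1
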